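/- For every integer n > 1, an n-ladder L is maximal if and only if L has no cofinal meet-subsemilattice C such that C, with the induced order, is an (n-1)-ladder (equivalently, such that every element of C has at most n-1 lower covers within C). -/

import Mathlib

/-- `P` is an `n`-ladder: a nonempty lower finite lattice in which every element
has at most `n` lower covers. -/
def IsNLadder (P : Type*) [Lattice P] (n : ℕ) : Prop :=
  Nonempty P ∧ (∀ x : P, (Set.Iic x).Finite) ∧ ∀ x : P, {y : P | y ⋖ x}.ncard ≤ n

/-- `P` is a maximal `n`-ladder: an `n`-ladder which is not order-isomorphic to
a proper ideal of any `n`-ladder. -/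
def IsMaximalNLadder (P : Type u) [Lattice P] (n : ℕ) : Prop :=
  IsNLadder P n ∧
    ¬ ∃ (Q : Type u) (_ : Lattice Q) (I : Order.Ideal Q),
        IsNLadder Q n ∧ I.IsProper ∧ Nonempty (P ≃o ↥I)

open Set

universe u

set_option linter.unusedSectionVars false

lemma exists_greatest_of_supClosed {α : Type*} [SemilatticeSup α] {T : Set α}
    (hfin : T.Finite) (hne : T.Nonempty) (hcl : ∀ a ∈ T, ∀ b ∈ T, a ⊔ b ∈ T) :
    ∃ m ∈ T, ∀ y ∈ T, y ≤ m := by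
  obtain ⟨a, ha⟩ := hne
  refine ⟨hfin.toFinset.sup' ⟨a, hfin.mem_toFinset.2 ha⟩ id, ?_, ?_⟩
  · exact Finset.sup'_mem T hcl _ _ id (fun i hi => hfin.mem_toFinset.1 hi)
  · intro y hy; exact Finset.le_sup' id (hfin.mem_toFinset.2 hy)

lemma exists_covby_of_lt {Q : Type*} [PartialOrder Q] {a d : Q}
    (h : a < d) (hfin : (Set.Iic d).Finite) : ∃ w, a ≤ w ∧ w ⋖ d := by
  have hT : ({v | a ≤ v ∧ v < d}).Finite := hfin.subset (fun v hv => le_of_lt hv.2)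
  obtain ⟨mw, hm, hmax'⟩ := hT.exists_maximalFor id _ ⟨a, le_refl a, h⟩
  have hmax : ∀ c ∈ {v | a ≤ v ∧ v < d}, mw ≤ c → mw = c :=
    fun c hc hle => le_antisymm hle (hmax' hc hle)
  refine ⟨mw, hm.1, hm.2, fun c hc1 hc2 => ?_⟩
  exact absurd (hmax c ⟨le_trans hm.1 hc1.le, hc2⟩ hc1.le) (ne_of_lt hc1)

lemma exists_C_of_ideal {L : Type u} [Lattice L] {n : ℕ}
    {Q : Type u} [Lattice Q] {I : Order.Ideal Q} (hQ : IsNLadder Q n)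
    (hprop : I.IsProper) (f : L ≃o ↥I) :
    ∃ C : Set L, C.Nonempty ∧
      (∀ x ∈ C, ∀ y ∈ C, x ⊓ y ∈ C) ∧
      (∀ p : L, ∃ c ∈ C, p ≤ c) ∧
      (∀ x ∈ C, {z | z ∈ C ∧ z < x ∧ ∀ y ∈ C, ¬ (z < y ∧ y < x)}.ncard ≤ n - 1) := by
  obtain ⟨-, hfinQ, hcovQ⟩ := hQ
  set S : Set Q := (I : Set Q) with hSdef
  obtain ⟨s₀, hs₀⟩ : S.Nonempty := I.nonempty
  obtain ⟨q, hq⟩ : ∃ q, q ∉ S := by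
    by_contra hqq; push_neg at hqq
    exact hprop.ne_univ (Set.eq_univ_of_forall hqq)
  have hlow : ∀ {a b : Q}, b ≤ a → a ∈ S → b ∈ S := fun h ha => I.lower h ha
  have hsup : ∀ {a b : Q}, a ∈ S → b ∈ S → a ⊔ b ∈ S := fun ha hb => Order.Ideal.sup_mem ha hb
  -- the trace function m
  have hm : ∀ d : Q, ∃ x, x ∈ S ∧ x ≤ d ∧ ∀ y ∈ S, y ≤ d → y ≤ x := by
    intro d
    have hTfin : (S ∩ Set.Iic d).Finite := (hfinQ d).subset inter_subset_right
    have hTne : (S ∩ Set.Iic d).Nonempty :=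
      ⟨s₀ ⊓ d, ⟨hlow inf_le_left hs₀, inf_le_right⟩⟩
    obtain ⟨mm, hmT, hub⟩ := exists_greatest_of_supClosed hTfin hTne
      (fun a ha b hb => ⟨hsup ha.1 hb.1, sup_le ha.2 hb.2⟩)
    exact ⟨mm, hmT.1, hmT.2, fun y hy hyd => hub y ⟨hy, hyd⟩⟩
  choose m hmS hmle hmmax using hm
  have hmono : ∀ {d d' : Q}, d ≤ d' → m d ≤ m d' :=
    fun {d d'} h => hmmax d' (m d) (hmS d) (le_trans (hmle d) h)
  set F : L → Q := fun x => ((f x : ↥I) : Q) with hFdef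
  have hFS : ∀ x, F x ∈ S := fun x => (f x).2
  have hFle : ∀ {x y : L}, x ≤ y ↔ F x ≤ F y := by
    intro x y
    constructor
    · intro h; exact Subtype.coe_le_coe.2 (f.le_iff_le.2 h)
    · intro h; exact f.le_iff_le.1 (Subtype.coe_le_coe.1 h)
  have hFlt : ∀ {x y : L}, x < y ↔ F x < F y := by
    intro x y
    rw [lt_iff_le_not_ge, lt_iff_le_not_ge, hFle, hFle]
  have hFsurj : ∀ s ∈ S, ∃ x : L, F x = s := fun s hs => ⟨f.symm ⟨s, hs⟩, by simp [hFdef]⟩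
  have hqd : ∀ {d : Q}, q ≤ d → d ∉ S := fun h hd => hq (hlow h hd)
  refine ⟨{x : L | ∃ d : Q, q ≤ d ∧ F x = m d}, ?_, ?_, ?_, ?_⟩
  · obtain ⟨c, hc⟩ := hFsurj (m q) (hmS q)
    exact ⟨c, q, le_refl q, hc⟩
  · rintro x ⟨d, hd, hFx⟩ y ⟨e, he, hFy⟩
    have hFinf : F (x ⊓ y) = F x ⊓ F y := by
      have h1 : F (x ⊓ y) ≤ F x ⊓ F y :=
        le_inf (hFle.1 inf_le_left) (hFle.1 inf_le_right)
      have h2 : F x ⊓ F y ∈ S := hlow inf_le_left (hFS x)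
      obtain ⟨z, hz⟩ := hFsurj _ h2
      have hzx : z ≤ x := hFle.2 (hz ▸ inf_le_left)
      have hzy : z ≤ y := hFle.2 (hz ▸ inf_le_right)
      have := hFle.1 (le_inf hzx hzy)
      rw [hz] at this
      exact le_antisymm h1 this
    refine ⟨d ⊓ e, le_inf hd he, ?_⟩
    rw [hFinf, hFx, hFy]
    exact le_antisymm
      (hmmax _ _ (hlow inf_le_left (hmS d)) (inf_le_inf (hmle d) (hmle e)))
      (le_inf (hmono inf_le_left) (hmono inf_le_right))
  · intro p
    obtain ⟨c, hc⟩ := hFsurj (m (F p ⊔ q)) (hmS _)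
    refine ⟨c, ⟨F p ⊔ q, le_sup_right, hc⟩, ?_⟩
    exact hFle.2 (hc ▸ hmmax _ _ (hFS p) le_sup_left)
  · rintro x hx
    -- canonical witness lemma
    have hCx : ∀ z : L, (∃ d : Q, q ≤ d ∧ F z = m d) → F z = m (F z ⊔ q) := by
      rintro z ⟨d, hd, hFz⟩
      have h1 : F z ⊔ q ≤ d := sup_le (hFz ▸ hmle d) hd
      refine le_antisymm (hmmax _ _ (hFS z) le_sup_left) ?_
      calc m (F z ⊔ q) ≤ m d := hmono h1
        _ = F z := hFz.symm
    set x₀ : Q := F x with hx₀def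
    set d₀ : Q := x₀ ⊔ q with hd₀def
    have hx₀ : x₀ = m d₀ := hCx x hx
    have hd₀S : d₀ ∉ S := hqd le_sup_right
    have hx₀d₀ : x₀ < d₀ :=
      lt_of_le_of_ne le_sup_left (fun h => hd₀S (h ▸ hFS x))
    obtain ⟨w₀, hxw₀, hw₀⟩ := exists_covby_of_lt hx₀d₀ (hfinQ d₀)
    set Hx := {z | (z ∈ {x : L | ∃ d : Q, q ≤ d ∧ F x = m d}) ∧ z < x ∧
      ∀ y ∈ {x : L | ∃ d : Q, q ≤ d ∧ F x = m d}, ¬ (z < y ∧ y < x)} with hHxdef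
    have hw : ∀ z ∈ Hx, ∃ w, F z ⊔ q ≤ w ∧ w ⋖ d₀ := by
      rintro z ⟨hzC, hzx, -⟩
      have h1 : F z = m (F z ⊔ q) := hCx z hzC
      have h2 : F z ⊔ q ≤ d₀ := sup_le (le_trans (hFlt.1 hzx).le le_sup_left) le_sup_right
      have h3 : F z ⊔ q < d₀ := by
        refine lt_of_le_of_ne h2 (fun hcon => ?_)
        rw [hcon] at h1
        exact absurd (h1.trans hx₀.symm) (ne_of_lt (hFlt.1 hzx))
      exact exists_covby_of_lt h3 (hfinQ d₀)
    classical
    set φ : L → Q := fun z => if hz : z ∈ Hx then (hw z hz).choose else q with hφdef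
    have hφspec : ∀ z (hz : z ∈ Hx), F z ⊔ q ≤ φ z ∧ φ z ⋖ d₀ := by
      intro z hz
      simp only [hφdef, dif_pos hz]
      exact (hw z hz).choose_spec
    have hφmem : ∀ z ∈ Hx, φ z ∈ {w | w ⋖ d₀} \ {w₀} := by
      intro z hz
      obtain ⟨h1, h2⟩ := hφspec z hz
      refine ⟨h2, fun hcon => ?_⟩
      have : d₀ ≤ φ z := by
        rw [hd₀def]
        exact sup_le (hcon ▸ hxw₀) (le_trans le_sup_right h1)
      exact absurd h2.lt (not_lt_of_ge this)
    have hφinj : Set.InjOn φ Hx := by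
      intro z1 hz1 z2 hz2 heq
      obtain ⟨h11, h12⟩ := hφspec z1 hz1
      obtain ⟨h21, h22⟩ := hφspec z2 hz2
      set w : Q := φ z1 with hwdef
      have hqw : q ≤ w := le_trans le_sup_right h11
      obtain ⟨c, hc⟩ := hFsurj (m w) (hmS w)
      have hcC : c ∈ {x : L | ∃ d : Q, q ≤ d ∧ F x = m d} := ⟨w, hqw, hc⟩
      have hz1c : F z1 ≤ F c := by
        rw [hc, hCx z1 hz1.1]; exact hmono h11
      have hz2c : F z2 ≤ F c := by
        rw [hc, hCx z2 hz2.1]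
        exact hmono (heq ▸ h21)
      have hcx₀ : F c ≤ x₀ := by
        rw [hc, hx₀]; exact hmono h12.lt.le
      have hcne : F c ≠ x₀ := by
        intro hcon
        have hxw : x₀ ≤ w := hcon ▸ (hc ▸ hmle w)
        have : d₀ ≤ w := sup_le hxw hqw
        exact absurd h12.lt (not_lt_of_ge this)
      have hcxlt : c < x := hFlt.2 (lt_of_le_of_ne hcx₀ hcne)
      have e1 : z1 = c := by
        rcases (hFle.2 hz1c).lt_or_eq with h | h
        · exact absurd ⟨h, hcxlt⟩ (hz1.2.2 c hcC)
        · exact h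
      have e2 : z2 = c := by
        rcases (hFle.2 hz2c).lt_or_eq with h | h
        · exact absurd ⟨h, hcxlt⟩ (hz2.2.2 c hcC)
        · exact h
      rw [e1, e2]
    have hcovfin : {w | w ⋖ d₀}.Finite := (hfinQ d₀).subset (fun w hw => hw.lt.le)
    calc Hx.ncard ≤ ({w | w ⋖ d₀} \ {w₀}).ncard :=
          Set.ncard_le_ncard_of_injOn φ hφmem hφinj (hcovfin.diff)
      _ = {w | w ⋖ d₀}.ncard - 1 := Set.ncard_diff_singleton_of_mem (s := {w | w ⋖ d₀}) hw₀
      _ ≤ n - 1 := Nat.sub_le_sub_right (hcovQ d₀) 1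


section Extension
variable {L : Type u} [Lattice L]

inductive LadderExt (C : Set L) : Type u
  | base : L → LadderExt C
  | top : C → LadderExt C

namespace LadderExt
variable {C : Set L}

def le : LadderExt C → LadderExt C → Prop
  | base x, base y => x ≤ y
  | base x, top c => x ≤ (c : L)
  | top _, base _ => False
  | top c, top d => (c : L) ≤ (d : L)

instance : PartialOrder (LadderExt C) where
  le := le
  le_refl a := by cases a <;> exact le_refl _
  le_trans a b c h1 h2 := by
    cases a <;> cases b <;> cases c <;>
      first
        | exact le_trans h1 h2
        | exact h1.elim
        | exact h2.elim
  le_antisymm a b h1 h2 := by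
    cases a <;> cases b
    · exact congrArg base (le_antisymm h1 h2)
    · exact h2.elim
    · exact h1.elim
    · exact congrArg top (Subtype.ext (le_antisymm h1 h2))

@[simp] lemma base_le_base {x y : L} : (base x : LadderExt C) ≤ base y ↔ x ≤ y := Iff.rfl
@[simp] lemma base_le_top {x : L} {c : C} : (base x : LadderExt C) ≤ top c ↔ x ≤ (c : L) := Iff.rfl
@[simp] lemma not_top_le_base {c : C} {x : L} : ¬ (top c : LadderExt C) ≤ base x := fun h => h
@[simp] lemma top_le_top {c d : C} : (top c : LadderExt C) ≤ top d ↔ (c : L) ≤ (d : L) := Iff.rfl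

@[simp] lemma base_lt_base {x y : L} : (base x : LadderExt C) < base y ↔ x < y := by
  simp [lt_iff_le_not_ge]

@[simp] lemma top_lt_top {c d : C} : (top c : LadderExt C) < top d ↔ (c : L) < (d : L) := by
  simp [lt_iff_le_not_ge]

lemma base_lt_top {x : L} {c : C} (h : x ≤ (c : L)) : (base x : LadderExt C) < top c :=
  lt_iff_le_not_ge.2 ⟨h, not_top_le_base⟩

lemma iicFinite (hfin : ∀ x : L, (Set.Iic x).Finite) (z : LadderExt C) : (Set.Iic z).Finite := by
  cases z with
  | base x =>
    refine ((hfin x).image (fun y => (base y : LadderExt C))).subset ?_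
    rintro (y | c) hy
    · exact ⟨y, hy, rfl⟩
    · exact absurd (mem_Iic.1 hy) not_top_le_base
  | top c =>
    have h1 : (base '' Set.Iic (c : L) : Set (LadderExt C)).Finite := (hfin c).image _
    have h2 : (top '' (Subtype.val ⁻¹' Set.Iic (c : L)) : Set (LadderExt C)).Finite :=
      (((hfin c).preimage (Subtype.val_injective.injOn)).image _)
    refine (h1.union h2).subset ?_
    rintro (y | d) hy
    · exact Or.inl ⟨y, hy, rfl⟩
    · exact Or.inr ⟨d, hy, rfl⟩

lemma covers_base_subset (x : L) :
    {z : LadderExt C | z ⋖ base x} ⊆ base '' {y | y ⋖ x} := by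
  rintro (y | c) hz
  · refine ⟨y, ⟨base_lt_base.1 hz.lt, fun u hu1 hu2 => ?_⟩, rfl⟩
    exact hz.2 (base_lt_base.2 hu1) (base_lt_base.2 hu2)
  · exact absurd hz.lt.le not_top_le_base

lemma base_covby_top {x : L} {c : C} (h : (base x : LadderExt C) ⋖ top c) : x = (c : L) := by
  have hle : x ≤ (c : L) := h.lt.le
  rcases eq_or_lt_of_le hle with h1 | h1
  · exact h1
  · exact absurd (base_lt_top (le_refl (c : L))) (h.2 (base_lt_base.2 h1))

lemma top_covby_top {c d : C} (h : (top d : LadderExt C) ⋖ top c) :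
    (d : L) ∈ C ∧ (d : L) < (c : L) ∧ ∀ y ∈ C, ¬ ((d : L) < y ∧ y < (c : L)) := by
  refine ⟨d.2, top_lt_top.1 h.lt, fun y hy hcon => ?_⟩
  exact h.2 (c := top ⟨y, hy⟩) (top_lt_top.2 hcon.1) (top_lt_top.2 hcon.2)

def proj : LadderExt C → L
  | base y => y
  | top d => (d : L)

lemma base_injective : Function.Injective (base : L → LadderExt C) := by
  intro a b h
  injection h

noncomputable def lattice (hmeet : ∀ x ∈ C, ∀ y ∈ C, x ⊓ y ∈ C)
    (σ : L → C) (hσ1 : ∀ p : L, p ≤ (σ p : L))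
    (hσ2 : ∀ (p : L) (e : C), p ≤ (e : L) → (σ p : L) ≤ (e : L)) : Lattice (LadderExt C) where
  __ := (inferInstance : PartialOrder (LadderExt C))
  sup a b :=
    match a, b with
    | base x, base y => base (x ⊔ y)
    | base x, top c => top (σ (x ⊔ (c : L)))
    | top c, base x => top (σ (x ⊔ (c : L)))
    | top c, top d => top (σ ((c : L) ⊔ (d : L)))
  le_sup_left a b := by
    cases a <;> cases b
    · exact base_le_base.2 le_sup_left
    · exact base_le_top.2 (le_trans le_sup_left (hσ1 _))
    · exact top_le_top.2 (le_trans le_sup_right (hσ1 _))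
    · exact top_le_top.2 (le_trans le_sup_left (hσ1 _))
  le_sup_right a b := by
    cases a <;> cases b
    · exact base_le_base.2 le_sup_right
    · exact top_le_top.2 (le_trans le_sup_right (hσ1 _))
    · exact base_le_top.2 (le_trans le_sup_left (hσ1 _))
    · exact top_le_top.2 (le_trans le_sup_right (hσ1 _))
  sup_le a b u h1 h2 := by
    cases a <;> cases b <;> cases u
    · exact base_le_base.2 (sup_le h1 h2)
    · exact base_le_top.2 (sup_le h1 h2)
    · exact absurd h2 not_top_le_base
    · exact top_le_top.2 (hσ2 _ _ (sup_le h1 (top_le_top.1 h2)))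
    · exact absurd h1 not_top_le_base
    · exact top_le_top.2 (hσ2 _ _ (sup_le h2 (top_le_top.1 h1)))
    · exact absurd h1 not_top_le_base
    · exact top_le_top.2 (hσ2 _ _ (sup_le (top_le_top.1 h1) (top_le_top.1 h2)))
  inf a b :=
    match a, b with
    | base x, base y => base (x ⊓ y)
    | base x, top c => base (x ⊓ (c : L))
    | top c, base x => base ((c : L) ⊓ x)
    | top c, top d => top ⟨(c : L) ⊓ (d : L), hmeet _ c.2 _ d.2⟩
  inf_le_left a b := by
    cases a <;> cases b
    · exact base_le_base.2 inf_le_left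
    · exact base_le_base.2 inf_le_left
    · exact base_le_top.2 inf_le_left
    · exact top_le_top.2 inf_le_left
  inf_le_right a b := by
    cases a <;> cases b
    · exact base_le_base.2 inf_le_right
    · exact base_le_top.2 inf_le_right
    · exact base_le_base.2 inf_le_right
    · exact top_le_top.2 inf_le_right
  le_inf u a b h1 h2 := by
    cases u <;> cases a <;> cases b
    · exact base_le_base.2 (le_inf h1 h2)
    · exact base_le_base.2 (le_inf h1 h2)
    · exact base_le_base.2 (le_inf h1 h2)
    · exact base_le_top.2 (le_inf h1 h2)
    · exact absurd h1 not_top_le_base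
    · exact absurd h1 not_top_le_base
    · exact absurd h2 not_top_le_base
    · exact top_le_top.2 (le_inf h1 h2)

def theIdeal (hLne : Nonempty L) : Order.Ideal (LadderExt C) where
  carrier := Set.range base
  lower' := by
    rintro a b hba ⟨x, rfl⟩
    cases b with
    | base y => exact ⟨y, rfl⟩
    | top c => exact absurd hba not_top_le_base
  nonempty' := ⟨base hLne.some, hLne.some, rfl⟩
  directed' := by
    rintro _ ⟨x, rfl⟩ _ ⟨y, rfl⟩
    exact ⟨base (x ⊔ y), ⟨x ⊔ y, rfl⟩, base_le_base.2 le_sup_left, base_le_base.2 le_sup_right⟩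

end LadderExt
end Extension

lemma not_maximal_aux {L : Type u} [Lattice L] {n : ℕ} (hn : 1 ≤ n) (hL : IsNLadder L n)
    {C : Set L} (hmeet : ∀ x ∈ C, ∀ y ∈ C, x ⊓ y ∈ C)
    (hcof : ∀ p : L, ∃ c ∈ C, p ≤ c)
    (hcov : ∀ x ∈ C, {z | z ∈ C ∧ z < x ∧ ∀ y ∈ C, ¬ (z < y ∧ y < x)}.ncard ≤ n - 1) :
    ∃ (Q : Type u) (_ : Lattice Q) (I : Order.Ideal Q),
      IsNLadder Q n ∧ I.IsProper ∧ Nonempty (L ≃o ↥I) := by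
  obtain ⟨hLne, hfin, hcovL⟩ := hL
  have hσex : ∀ p : L, ∃ c : C, p ≤ (c : L) ∧ ∀ e : C, p ≤ (e : L) → (c : L) ≤ (e : L) := by
    intro p
    obtain ⟨c₀, hc₀C, hpc₀⟩ := hcof p
    have hTfin : ({c | c ∈ C ∧ p ≤ c} ∩ Iic c₀).Finite := (hfin c₀).subset inter_subset_right
    obtain ⟨mm, hmm, hmin'⟩ := hTfin.exists_minimalFor id _
      ⟨c₀, ⟨⟨hc₀C, hpc₀⟩, le_refl _⟩⟩
    have hmin : ∀ a' ∈ {c | c ∈ C ∧ p ≤ c} ∩ Iic c₀, a' ≤ mm → mm = a' :=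
      fun a' ha' hle => le_antisymm (hmin' ha' hle) hle
    refine ⟨⟨mm, hmm.1.1⟩, hmm.1.2, ?_⟩
    rintro ⟨e, heC⟩ hpe
    have hmem : mm ⊓ e ∈ {c | c ∈ C ∧ p ≤ c} ∩ Iic c₀ :=
      ⟨⟨hmeet _ hmm.1.1 _ heC, le_inf hmm.1.2 hpe⟩, le_trans inf_le_left hmm.2⟩
    have h : mm = mm ⊓ e := hmin _ hmem inf_le_left
    calc (mm : L) = mm ⊓ e := h
      _ ≤ e := inf_le_right
  choose σ hσ1 hσ2 using hσex
  letI : Lattice (LadderExt C) := LadderExt.lattice hmeet σ hσ1 hσ2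
  have hCne : C.Nonempty := by
    obtain ⟨c₀, hc₀, -⟩ := hcof hLne.some
    exact ⟨c₀, hc₀⟩
  refine ⟨LadderExt C, inferInstance, LadderExt.theIdeal hLne, ?_, ?_, ?_⟩
  · -- IsNLadder
    refine ⟨⟨LadderExt.base hLne.some⟩, LadderExt.iicFinite hfin, ?_⟩
    intro z
    cases z with
    | base x =>
      have hco : {y | y ⋖ x}.Finite := (hfin x).subset (fun y hy => hy.lt.le)
      calc {z : LadderExt C | z ⋖ LadderExt.base x}.ncard
          ≤ (LadderExt.base '' {y | y ⋖ x}).ncard :=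
            Set.ncard_le_ncard (LadderExt.covers_base_subset x) (hco.image _)
        _ = {y | y ⋖ x}.ncard := Set.ncard_image_of_injective _ LadderExt.base_injective
        _ ≤ n := hcovL x
    | top c =>
      set Hc := {z | z ∈ C ∧ z < (c : L) ∧ ∀ y ∈ C, ¬ (z < y ∧ y < (c : L))} with hHcdef
      have hHfin : Hc.Finite := (hfin c).subset (fun z hz => hz.2.1.le)
      have hins : (insert (c : L) Hc).Finite := hHfin.insert _
      have hmaps : ∀ z ∈ {z : LadderExt C | z ⋖ LadderExt.top c},
          LadderExt.proj z ∈ insert (c : L) Hc := by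
        rintro (y | d) hz
        · exact (LadderExt.base_covby_top hz) ▸ Set.mem_insert _ _
        · exact Set.mem_insert_of_mem _ (LadderExt.top_covby_top hz)
      have hinj : Set.InjOn LadderExt.proj {z : LadderExt C | z ⋖ LadderExt.top c} := by
        rintro (y1 | d1) h1 (y2 | d2) h2 heq
        · exact congrArg _ heq
        · exfalso
          have e1 : y1 = (c : L) := LadderExt.base_covby_top h1
          have e2 : (d2 : L) < (c : L) := (LadderExt.top_covby_top h2).2.1
          rw [show LadderExt.proj (LadderExt.base y1) = y1 from rfl,
            show LadderExt.proj (LadderExt.top d2) = (d2 : L) from rfl] at heq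
          rw [e1] at heq
          exact absurd heq.symm (ne_of_lt e2)
        · exfalso
          have e1 : y2 = (c : L) := LadderExt.base_covby_top h2
          have e2 : (d1 : L) < (c : L) := (LadderExt.top_covby_top h1).2.1
          rw [show LadderExt.proj (LadderExt.base y2) = y2 from rfl,
            show LadderExt.proj (LadderExt.top d1) = (d1 : L) from rfl] at heq
          rw [e1] at heq
          exact absurd heq (ne_of_lt e2)
        · exact congrArg _ (Subtype.ext heq)
      calc {z : LadderExt C | z ⋖ LadderExt.top c}.ncard
          ≤ (insert (c : L) Hc).ncard :=
            Set.ncard_le_ncard_of_injOn _ hmaps hinj hins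
        _ ≤ Hc.ncard + 1 := Set.ncard_insert_le _ _
        _ ≤ (n - 1) + 1 := by
            have h2 : Hc.ncard ≤ n - 1 := by rw [hHcdef]; exact hcov (c : L) c.2
            omega
        _ ≤ n := by omega
  · -- IsProper
    refine ⟨fun hcon => ?_⟩
    have hmem : (LadderExt.top ⟨hCne.choose, hCne.choose_spec⟩ : LadderExt C) ∈
        ((LadderExt.theIdeal hLne : Order.Ideal (LadderExt C)) : Set (LadderExt C)) := by
      exact (Set.eq_univ_iff_forall.1 hcon) _
    obtain ⟨x, hx⟩ := hmem
    exact absurd hx (by simp [LadderExt.theIdeal])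
  · -- order iso
    refine ⟨⟨⟨fun x => ⟨LadderExt.base x, ⟨x, rfl⟩⟩,
      fun z => LadderExt.proj z.1, fun x => rfl, ?_⟩, ?_⟩⟩
    · rintro ⟨z, x, rfl⟩
      rfl
    · intro a b
      exact Iff.rfl

/-- for `n > 1`, an `n`-ladder `L` is maximal iff it has no
cofinal meet-subsemilattice `C` all of whose elements have at most `n - 1`
lower covers within `C` (i.e. `C` with the induced order is an `(n-1)`-ladder). -/
theorem maximal_iff_no_cofinal_meet_subsemilattice {L : Type u} [Lattice L]
    (n : ℕ) (hn : 1 < n) (hL : IsNLadder L n) :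
    IsMaximalNLadder L n ↔
      ¬ ∃ C : Set L, C.Nonempty ∧
        (∀ x ∈ C, ∀ y ∈ C, x ⊓ y ∈ C) ∧
        (∀ p : L, ∃ c ∈ C, p ≤ c) ∧
        (∀ x ∈ C, {z | z ∈ C ∧ z < x ∧ ∀ y ∈ C, ¬ (z < y ∧ y < x)}.ncard ≤ n - 1) := by
  constructor
  · rintro ⟨-, hnot⟩ ⟨C, hCne, hmeet, hcof, hcov⟩
    exact hnot (not_maximal_aux (le_of_lt hn) ⟨hL.1, hL.2.1, hL.2.2⟩ hmeet hcof hcov)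
  · intro hno
    refine ⟨hL, ?_⟩
    rintro ⟨Q, _, I, hQ, hprop, ⟨f⟩⟩
    exact hno (exists_C_of_ideal hQ hprop f)
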